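/- Let (K,G) be a topological dynamical system, let fix = {f ∈ C(K,ℂ) : f(g·x) = f(x) for all g ∈ G, x ∈ K}, and let R_fix = {(x,y) ∈ K × K : f(x) = f(y) for all f ∈ fix}. Then R_fix is the smallest closed equivalence relation on K containing the orbit relation R = {(x, g·x) : x ∈ K, g ∈ G}. In particular, every continuous G-invariant function K → ℂ is constant if and only if the smallest closed equivalence relation on K containing R equals K × K. -/

import Mathlib

open Filter Topology Set Function

/-- The smallest closed equivalence relation on `K` containing the relation `R`. -/
def smallestClosedEquiv {K : Type} [TopologicalSpace K] (R : Set (K × K)) : Set (K × K) :=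
  ⋂₀ {E : Set (K × K) | R ⊆ E ∧ IsClosed E ∧ (∀ x : K, (x, x) ∈ E) ∧
    (∀ a b : K, (a, b) ∈ E → (b, a) ∈ E) ∧
    (∀ a b c : K, (a, b) ∈ E → (b, c) ∈ E → (a, c) ∈ E)}

/-- Separation of points not related by a closed equivalence relation on a compact
Hausdorff space, by a continuous real function constant on equivalence classes. -/
lemma closedEquiv_separation {K : Type} [TopologicalSpace K] [CompactSpace K] [T2Space K]
    (E : Set (K × K)) (hcl : IsClosed E) (hrefl : ∀ x : K, (x, x) ∈ E)
    (hsym : ∀ a b : K, (a, b) ∈ E → (b, a) ∈ E)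
    (htrans : ∀ a b c : K, (a, b) ∈ E → (b, c) ∈ E → (a, c) ∈ E)
    {x y : K} (hxy : (x, y) ∉ E) :
    ∃ u : ContinuousMap K ℝ, (∀ a b : K, (a, b) ∈ E → u a = u b) ∧ u x ≠ u y := by
  classical
  let s : Setoid K := ⟨fun a b => (a, b) ∈ E,
    ⟨fun a => hrefl a, fun h => hsym _ _ h, fun h h' => htrans _ _ _ h h'⟩⟩
  let Q := Quotient s
  let π : K → Q := Quotient.mk s
  have hπcont : Continuous π := continuous_quotient_mk'
  have hπquot : IsQuotientMap π := isQuotientMap_quotient_mk'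
  have hmk : ∀ a b : K, π a = π b ↔ (a, b) ∈ E := by
    intro a b
    constructor
    · exact fun h => Quotient.exact h
    · exact fun h => Quotient.sound h
  -- saturation of a closed set is closed
  have hsat : ∀ C : Set K, IsClosed C → IsClosed (π ⁻¹' (π '' C)) := by
    intro C hC
    have heq : π ⁻¹' (π '' C) = Prod.fst '' (E ∩ Set.univ ×ˢ C) := by
      ext a
      simp only [Set.mem_preimage, Set.mem_image, Set.mem_inter_iff, Set.mem_prod,
        Set.mem_univ, true_and, Prod.exists]
      constructor
      · rintro ⟨c, hc, hce⟩
        exact ⟨a, c, ⟨(hmk a c).1 hce.symm, hc⟩, rfl⟩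
      · rintro ⟨a', c, ⟨hE, hc⟩, rfl⟩
        exact ⟨c, hc, ((hmk a' c).2 hE).symm⟩
    rw [heq]
    exact (((hcl.inter (isClosed_univ.prod hC)).isCompact.image continuous_fst).isClosed)
  have hπclosed : IsClosedMap π := by
    intro C hC
    rw [← hπquot.isClosed_preimage]
    exact hsat C hC
  haveI : CompactSpace Q := Quotient.compactSpace
  haveI : T2Space Q := by
    constructor
    intro q1 q2 hne
    obtain ⟨a, rfl⟩ := Quotient.exists_rep q1
    obtain ⟨b, rfl⟩ := Quotient.exists_rep q2
    have hFa : IsClosed (π ⁻¹' {π a}) := by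
      have : π ⁻¹' {π a} = (fun k => (k, a)) ⁻¹' E := by
        ext k; simp [hmk k a]
      rw [this]
      exact hcl.preimage (by fun_prop)
    have hFb : IsClosed (π ⁻¹' {π b}) := by
      have : π ⁻¹' {π b} = (fun k => (k, b)) ⁻¹' E := by
        ext k; simp [hmk k b]
      rw [this]
      exact hcl.preimage (by fun_prop)
    have hd : Disjoint (π ⁻¹' {π a}) (π ⁻¹' {π b}) := by
      rw [Set.disjoint_left]
      intro k hk1 hk2
      exact hne (hk1.symm.trans hk2)
    obtain ⟨U, V, hU, hV, hUa, hVb, hUV⟩ := normal_separation hFa hFb hd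
    refine ⟨(π '' Uᶜ)ᶜ, (π '' Vᶜ)ᶜ, (hπclosed _ hU.isClosed_compl).isOpen_compl,
      (hπclosed _ hV.isClosed_compl).isOpen_compl, ?_, ?_, ?_⟩
    · intro h
      obtain ⟨c, hc, hce⟩ := h
      exact hc (hUa (by simpa using hce))
    · intro h
      obtain ⟨c, hc, hce⟩ := h
      exact hc (hVb (by simpa using hce))
    · rw [Set.disjoint_left]
      intro q hq1 hq2
      obtain ⟨k, rfl⟩ := Quotient.exists_rep q
      have hkU : k ∈ U := by
        by_contra h
        exact hq1 ⟨k, h, rfl⟩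
      have hkV : k ∈ V := by
        by_contra h
        exact hq2 ⟨k, h, rfl⟩
      exact Set.disjoint_left.1 hUV hkU hkV
  have hxyQ : π x ≠ π y := fun h => hxy ((hmk x y).1 h)
  obtain ⟨u, hu0, hu1, -⟩ := exists_continuous_zero_one_of_isClosed
    (isClosed_singleton (x := π x)) (isClosed_singleton (x := π y))
    (by simpa [Set.disjoint_singleton] using hxyQ)
  refine ⟨u.comp ⟨π, hπcont⟩, ?_, ?_⟩
  · intro a b hab
    simp only [ContinuousMap.comp_apply, ContinuousMap.coe_mk]
    rw [(hmk a b).2 hab]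
  · simp only [ContinuousMap.comp_apply, ContinuousMap.coe_mk]
    rw [hu0 rfl, hu1 rfl]
    simp

/-- For a topological dynamical system `(K,G)`, the relation
`R_fix = {(x,y) | f(x) = f(y) for all continuous G-invariant f}` is the smallest closed
equivalence relation containing the orbit relation. In particular, every continuous
`G`-invariant function is constant iff this smallest closed equivalence relation is all
of `K × K`. -/
theorem statement12 {G K : Type} [Group G] [TopologicalSpace G] [IsTopologicalGroup G]
    [T2Space G] [TopologicalSpace K] [CompactSpace K] [T2Space K] [Nonempty K]
    [MulAction G K] [ContinuousSMul G K] :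
    ({z : K × K | ∀ f : ContinuousMap K ℂ,
        (∀ (g : G) (x : K), f (g • x) = f x) → f z.1 = f z.2} =
      smallestClosedEquiv {z : K × K | ∃ g : G, g • z.1 = z.2}) ∧
    ((∀ f : ContinuousMap K ℂ,
        (∀ (g : G) (x : K), f (g • x) = f x) → ∀ x y : K, f x = f y) ↔
      smallestClosedEquiv {z : K × K | ∃ g : G, g • z.1 = z.2} = Set.univ) := by
  set R : Set (K × K) := {z : K × K | ∃ g : G, g • z.1 = z.2} with hR
  set E : Set (K × K) := smallestClosedEquiv R with hE
  set Rfix : Set (K × K) := {z : K × K | ∀ f : ContinuousMap K ℂ,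
      (∀ (g : G) (x : K), f (g • x) = f x) → f z.1 = f z.2} with hRfix
  -- basic properties of E
  have hRE : R ⊆ E := fun z hz => fun S hS => hS.1 hz
  have hcl : IsClosed E := isClosed_sInter fun S hS => hS.2.1
  have hrefl : ∀ x : K, (x, x) ∈ E := fun x S hS => hS.2.2.1 x
  have hsym : ∀ a b : K, (a, b) ∈ E → (b, a) ∈ E :=
    fun a b h S hS => hS.2.2.2.1 a b (h S hS)
  have htrans : ∀ a b c : K, (a, b) ∈ E → (b, c) ∈ E → (a, c) ∈ E :=
    fun a b c h h' S hS => hS.2.2.2.2 a b c (h S hS) (h' S hS)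
  have hmain : Rfix = E := by
    apply Set.Subset.antisymm
    · -- hard direction
      intro z hz
      by_contra hzE
      obtain ⟨u, huE, huxy⟩ := closedEquiv_separation E hcl hrefl hsym htrans hzE
      apply huxy
      have := hz ((ContinuousMap.mk (Complex.ofReal) Complex.continuous_ofReal).comp u) ?_
      · simpa using this
      · intro g k
        simp only [ContinuousMap.comp_apply, ContinuousMap.coe_mk, Complex.ofReal_inj]
        exact (huE k (g • k) (hRE ⟨g, rfl⟩)).symm
    · -- E ⊆ Rfix since Rfix is a closed equivalence relation containing R
      apply Set.sInter_subset_of_mem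
      refine ⟨?_, ?_, ?_, ?_, ?_⟩
      · rintro ⟨a, b⟩ ⟨g, hg⟩ f hf
        simp only at hg
        show f a = f b
        rw [← hg]
        exact (hf g a).symm
      · have : Rfix = ⋂ f ∈ {f : ContinuousMap K ℂ | ∀ (g : G) (x : K), f (g • x) = f x},
            {z : K × K | f z.1 = f z.2} := by
          ext z; simp [hRfix]
        rw [this]
        exact isClosed_biInter fun f hf =>
          isClosed_eq (f.continuous.comp continuous_fst) (f.continuous.comp continuous_snd)
      · exact fun x f hf => rfl
      · exact fun a b h f hf => (h f hf).symm
      · exact fun a b c h h' f hf => (h f hf).trans (h' f hf)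
  refine ⟨hmain, ?_⟩
  constructor
  · intro h
    rw [← hmain]
    exact Set.eq_univ_of_forall fun z => fun f hf => h f hf z.1 z.2
  · intro h f hf x y
    have : (x, y) ∈ Rfix := by rw [hmain, h]; trivial
    exact this f hf
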